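/- Let 0 < d₀ < d, h > 0, p = √(d² + h²) − h, κ = (d − d₀)/d. For any r with d₀ < r < d, setting g = r/p (the gradient magnitude), one has (1/2)(1 − h/√(d² + h²)) < 1/(1 + g²) < ((1 − κ)⁻²/2)(1 − h/√(d² + h²)). -/

import Mathlib

theorem stmt_3 (d₀ d h r : ℝ) (hd0 : 0 < d₀) (hdd : d₀ < d) (hh : 0 < h)
    (hr1 : d₀ < r) (hr2 : r < d) :
    let p := Real.sqrt (d ^ 2 + h ^ 2) - h
    let κ := (d - d₀) / d
    let g := r / p
    (1 / 2) * (1 - h / Real.sqrt (d ^ 2 + h ^ 2)) < 1 / (1 + g ^ 2) ∧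
      1 / (1 + g ^ 2) < ((1 - κ)⁻¹ ^ 2 / 2) * (1 - h / Real.sqrt (d ^ 2 + h ^ 2)) := by
  intro p κ g
  have hd : 0 < d := hd0.trans hdd
  have hr : 0 < r := hd0.trans hr1
  set s := Real.sqrt (d ^ 2 + h ^ 2) with hs
  have hs2 : s ^ 2 = d ^ 2 + h ^ 2 := Real.sq_sqrt (by positivity)
  have hs0 : 0 < s := Real.sqrt_pos.mpr (by positivity)
  have hhs : h < s := by nlinarith
  have hp : 0 < p := by simp only [p]; linarith
  have hkey : p ^ 2 + d ^ 2 = 2 * p * s := by simp only [p]; nlinarith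
  have hinv : 1 / (1 + g ^ 2) = p ^ 2 / (p ^ 2 + r ^ 2) := by
    simp only [g]
    field_simp
  have hps : p = s - h := rfl
  have hlow : (1 / 2) * (1 - h / s) = p ^ 2 / (p ^ 2 + d ^ 2) := by
    rw [hkey, hps]
    field_simp
  have hk : (1 - κ)⁻¹ = d / d₀ := by
    simp only [κ]
    rw [inv_eq_iff_eq_inv]
    field_simp
    ring
  constructor
  · rw [hinv, hlow]
    apply div_lt_div_of_pos_left (by positivity) (by positivity)
    nlinarith
  · rw [hinv, hk]
    have h2 : (d / d₀) ^ 2 / 2 * (1 - h / s) = d ^ 2 * p ^ 2 / (d₀ ^ 2 * (p ^ 2 + d ^ 2)) := by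
      have : (d / d₀) ^ 2 / 2 * (1 - h / s) = (d / d₀) ^ 2 * ((1 / 2) * (1 - h / s)) := by ring
      rw [this, hlow]
      field_simp
    have hd02 : d₀ ^ 2 * (p ^ 2 + d ^ 2) < d ^ 2 * (p ^ 2 + r ^ 2) := by
      nlinarith [mul_lt_mul_of_pos_right (show d₀ ^ 2 < d ^ 2 by nlinarith) (pow_pos hp 2),
        mul_lt_mul_of_pos_left (show d₀ ^ 2 < r ^ 2 by nlinarith) (pow_pos hd 2)]
    rw [h2, div_lt_div_iff₀ (by positivity) (by positivity)]
    have h3 := mul_lt_mul_of_pos_left hd02 (pow_pos hp 2)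
    ring_nf at h3 ⊢
    linarith
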